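/- Let u and v be adjacent vertices of a graph G and let G_{u,v,2} be obtained from G by adding a path u, x_1, x_2, v of two new internal vertices (so x_1 is adjacent to u and x_2, and x_2 is adjacent to x_1 and v). Then γ(G) ≤ γ(G_{u,v,2}) ≤ γ(G) + 1, and γ(G_{u,v,2}) = γ(G) if and only if either some minimum dominating set of G contains both u and v, or at least one of u, v satisfies γ(G − w) < γ(G). -/

import Mathlib

/-- `D` is a dominating set of `G`: every vertex not in `D` has a neighbor in `D`. -/
def isDomSet {V : Type*} (G : SimpleGraph V) (D : Finset V) : Prop :=
  ∀ v, v ∉ D → ∃ u ∈ D, G.Adj u v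

/-- The domination number: minimum cardinality of a dominating set. -/
noncomputable def domNum {V : Type*} (G : SimpleGraph V) : ℕ :=
  sInf {n | ∃ D : Finset V, D.card = n ∧ isDomSet G D}

/-- The `(u,v)`-path-addition graph `G_{u,v,k}`: add an internally disjoint path with
`k` internal vertices between `u` and `v`. -/
noncomputable def pathAdd {V : Type*} (G : SimpleGraph V) (u v : V) (k : ℕ) :
    SimpleGraph (V ⊕ Fin k) :=
  SimpleGraph.fromRel (fun a b =>
    match a, b with
    | Sum.inl x, Sum.inl y => G.Adj x y
    | Sum.inl x, Sum.inr i => (x = u ∧ (i : ℕ) = 0) ∨ (x = v ∧ (i : ℕ) = k - 1)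
    | Sum.inr _, Sum.inl _ => False
    | Sum.inr i, Sum.inr j => (j : ℕ) = (i : ℕ) + 1)

lemma domNum_le {V : Type*} (G : SimpleGraph V) (D : Finset V) (hD : isDomSet G D) :
    domNum G ≤ D.card := Nat.sInf_le ⟨D, rfl, hD⟩

lemma exists_min {V : Type*} [Finite V] (G : SimpleGraph V) :
    ∃ D : Finset V, D.card = domNum G ∧ isDomSet G D := by
  have := Fintype.ofFinite V
  have hne : {n | ∃ D : Finset V, D.card = n ∧ isDomSet G D}.Nonempty :=
    ⟨Finset.univ.card, Finset.univ, rfl, fun w hw => absurd (Finset.mem_univ w) hw⟩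
  exact Nat.sInf_mem hne

section adjLemmas
variable {V : Type*} {G : SimpleGraph V} {u v : V}

lemma padj_ll {x y : V} : (pathAdd G u v 2).Adj (Sum.inl x) (Sum.inl y) ↔ G.Adj x y := by
  simp only [pathAdd, SimpleGraph.fromRel_adj]
  constructor
  · rintro ⟨-, hh | hh⟩
    · exact hh
    · exact hh.symm
  · intro hh
    exact ⟨by simp [G.ne_of_adj hh], Or.inl hh⟩

lemma padj_lr {x : V} {i : Fin 2} : (pathAdd G u v 2).Adj (Sum.inl x) (Sum.inr i) ↔
    ((x = u ∧ (i : ℕ) = 0) ∨ (x = v ∧ (i : ℕ) = 1)) := by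
  simp only [pathAdd, SimpleGraph.fromRel_adj]
  constructor
  · rintro ⟨-, hh | hh⟩
    · exact hh
    · exact hh.elim
  · intro hh
    exact ⟨by simp, Or.inl hh⟩

lemma padj_rl {x : V} {i : Fin 2} : (pathAdd G u v 2).Adj (Sum.inr i) (Sum.inl x) ↔
    ((x = u ∧ (i : ℕ) = 0) ∨ (x = v ∧ (i : ℕ) = 1)) := by
  rw [SimpleGraph.adj_comm]; exact padj_lr

lemma padj_01 : (pathAdd G u v 2).Adj (Sum.inr 0) (Sum.inr 1) := by
  simp only [pathAdd, SimpleGraph.fromRel_adj]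
  exact ⟨by simp, Or.inl (by simp)⟩

lemma padj_rr {i j : Fin 2} (hh : (pathAdd G u v 2).Adj (Sum.inr i) (Sum.inr j)) :
    (i = 0 ∧ j = 1) ∨ (i = 1 ∧ j = 0) := by
  revert hh; simp only [pathAdd, SimpleGraph.fromRel_adj]
  rintro ⟨-, hh | hh⟩ <;> omega

end adjLemmas

theorem stmt8 {V : Type*} [Fintype V] (G : SimpleGraph V) (u v : V) (h : G.Adj u v) :
    domNum G ≤ domNum (pathAdd G u v 2) ∧
    domNum (pathAdd G u v 2) ≤ domNum G + 1 ∧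
    (domNum (pathAdd G u v 2) = domNum G ↔
      ((∃ D : Finset V, isDomSet G D ∧ D.card = domNum G ∧ u ∈ D ∧ v ∈ D) ∨
        domNum (G.induce {w | w ≠ u}) < domNum G ∨
        domNum (G.induce {w | w ≠ v}) < domNum G)) := by
  classical
  set G' := pathAdd G u v 2 with hG'
  -- Part 1
  have part1 : domNum G ≤ domNum G' := by
    obtain ⟨D', hcard, hdom⟩ := exists_min G'
    set g : V ⊕ Fin 2 → V := Sum.elim id (fun i => if (i : ℕ) = 0 then u else v) with hg
    have hdomG : isDomSet G (D'.image g) := by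
      intro w hw
      have hwl : Sum.inl w ∉ D' := fun hm => hw (Finset.mem_image_of_mem g hm)
      obtain ⟨y, hy, hadj⟩ := hdom _ hwl
      match y with
      | Sum.inl z => exact ⟨z, Finset.mem_image_of_mem g hy, padj_ll.mp hadj⟩
      | Sum.inr i =>
        rcases padj_rl.mp hadj with ⟨rfl, hi⟩ | ⟨rfl, hi⟩
        · exact absurd (by have hm := Finset.mem_image_of_mem g hy; rwa [show g (Sum.inr i) = w by simp [hg, (Fin.ext hi : i = 0)]] at hm) hw
        · exact absurd (by have hm := Finset.mem_image_of_mem g hy; rwa [show g (Sum.inr i) = w by simp [hg, (Fin.ext hi : i = 1)]] at hm) hw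
    calc domNum G ≤ (D'.image g).card := domNum_le _ _ hdomG
      _ ≤ D'.card := Finset.card_image_le
      _ = domNum G' := hcard
  -- Part 2
  have part2 : domNum G' ≤ domNum G + 1 := by
    obtain ⟨D, hcard, hdom⟩ := exists_min G
    have hdom' : isDomSet G' (insert (Sum.inr 0) (D.image Sum.inl)) := by
      intro a ha
      match a with
      | Sum.inl w =>
        have hw : w ∉ D := fun hm =>
          ha (Finset.mem_insert_of_mem (Finset.mem_image_of_mem _ hm))
        obtain ⟨z, hz, hadj⟩ := hdom w hw
        exact ⟨Sum.inl z, Finset.mem_insert_of_mem (Finset.mem_image_of_mem _ hz),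
          padj_ll.mpr hadj⟩
      | Sum.inr i =>
        have hi0 : i ≠ 0 := fun hh => ha (hh ▸ Finset.mem_insert_self _ _)
        have hi : i = 1 := by omega
        exact ⟨Sum.inr 0, Finset.mem_insert_self _ _, hi ▸ padj_01⟩
    calc domNum G' ≤ _ := domNum_le _ _ hdom'
      _ ≤ (D.image Sum.inl).card + 1 := Finset.card_insert_le _ _
      _ = domNum G + 1 := by
          rw [Finset.card_image_of_injective _ Sum.inl_injective, hcard]
  refine ⟨part1, part2, ?_, ?_⟩
  · -- forward direction
    intro heq
    obtain ⟨D', hcard', hdom'⟩ := exists_min G'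
    rw [heq] at hcard'
    set DV : Finset V := Finset.univ.filter (fun w => Sum.inl w ∈ D') with hDV
    have hmemDV : ∀ w : V, w ∈ DV ↔ Sum.inl w ∈ D' := fun w => by simp [hDV]
    have himsub : DV.image Sum.inl ⊆ D' := by
      intro a ha
      obtain ⟨w, hw, rfl⟩ := Finset.mem_image.mp ha
      exact (hmemDV w).mp hw
    have hcardDV : DV.card = (DV.image (Sum.inl : V → V ⊕ Fin 2)).card :=
      (Finset.card_image_of_injective _ Sum.inl_injective).symm
    by_cases h0 : (Sum.inr 0 : V ⊕ Fin 2) ∈ D' <;>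
      by_cases h1 : (Sum.inr 1 : V ⊕ Fin 2) ∈ D'
    · -- both internal vertices in D' : contradiction
      exfalso
      have hsub : DV.image Sum.inl ⊆ (D'.erase (Sum.inr 0)).erase (Sum.inr 1) := by
        intro a ha
        obtain ⟨w, hw, rfl⟩ := Finset.mem_image.mp ha
        exact Finset.mem_erase.mpr ⟨by simp, Finset.mem_erase.mpr ⟨by simp, (hmemDV w).mp hw⟩⟩
      have e0 : (D'.erase (Sum.inr 0)).card = D'.card - 1 := Finset.card_erase_of_mem h0
      have h1' : (Sum.inr 1 : V ⊕ Fin 2) ∈ D'.erase (Sum.inr 0) :=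
        Finset.mem_erase.mpr ⟨by simp, h1⟩
      have e1 : ((D'.erase (Sum.inr 0)).erase (Sum.inr 1)).card =
          (D'.erase (Sum.inr 0)).card - 1 := Finset.card_erase_of_mem h1'
      have hle := Finset.card_le_card hsub
      have hpos : 0 < (D'.erase (Sum.inr 0)).card := Finset.card_pos.mpr ⟨_, h1'⟩
      have hdomD : isDomSet G (insert u DV) := by
        intro w hw
        have hwD : w ∉ DV := fun hm => hw (Finset.mem_insert_of_mem hm)
        have hwu : w ≠ u := fun hh => hw (hh ▸ Finset.mem_insert_self _ _)
        have hwl : Sum.inl w ∉ D' := fun hm => hwD ((hmemDV w).mpr hm)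
        obtain ⟨y, hy, hadj⟩ := hdom' _ hwl
        match y with
        | Sum.inl z =>
          exact ⟨z, Finset.mem_insert_of_mem ((hmemDV z).mpr hy), padj_ll.mp hadj⟩
        | Sum.inr i =>
          rcases padj_rl.mp hadj with ⟨rfl, hi⟩ | ⟨rfl, hi⟩
          · exact absurd rfl hwu
          · exact ⟨u, Finset.mem_insert_self _ _, h⟩
      have hγ := domNum_le G _ hdomD
      have hci := Finset.card_insert_le u DV
      omega
    · -- x₁ ∈ D', x₂ ∉ D'
      have hsub : DV.image Sum.inl ⊆ D'.erase (Sum.inr 0) := by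
        intro a ha
        obtain ⟨w, hw, rfl⟩ := Finset.mem_image.mp ha
        exact Finset.mem_erase.mpr ⟨by simp, (hmemDV w).mp hw⟩
      have e0 : (D'.erase (Sum.inr 0)).card = D'.card - 1 := Finset.card_erase_of_mem h0
      have hle := Finset.card_le_card hsub
      have hpos : 0 < D'.card := Finset.card_pos.mpr ⟨_, h0⟩
      by_cases hu : Sum.inl u ∈ D'
      · exfalso
        have hdomD : isDomSet G DV := by
          intro w hw
          have hwl : Sum.inl w ∉ D' := fun hm => hw ((hmemDV w).mpr hm)
          obtain ⟨y, hy, hadj⟩ := hdom' _ hwl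
          match y with
          | Sum.inl z => exact ⟨z, (hmemDV z).mpr hy, padj_ll.mp hadj⟩
          | Sum.inr i =>
            rcases padj_rl.mp hadj with ⟨rfl, hi⟩ | ⟨rfl, hi⟩
            · exact absurd ((hmemDV w).mpr hu) hw
            · have : i = 1 := by omega
              exact absurd (this ▸ hy) h1
        have hγ := domNum_le G _ hdomD
        omega
      · refine Or.inr (Or.inl ?_)
        set D₀ : Finset ↥{w : V | w ≠ u} := DV.subtype (fun w => w ∈ {w : V | w ≠ u})
          with hD₀
        have hdom₀ : isDomSet (G.induce {w | w ≠ u}) D₀ := by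
          rintro ⟨w, hw⟩ hmem
          have hwDV : w ∉ DV := fun hm => hmem (Finset.mem_subtype.mpr hm)
          have hwl : Sum.inl w ∉ D' := fun hm => hwDV ((hmemDV w).mpr hm)
          obtain ⟨y, hy, hadj⟩ := hdom' _ hwl
          match y with
          | Sum.inl z =>
            have hzu : z ≠ u := fun hh => hu (hh ▸ hy)
            exact ⟨⟨z, hzu⟩, Finset.mem_subtype.mpr ((hmemDV z).mpr hy),
              show G.Adj z w from padj_ll.mp hadj⟩
          | Sum.inr i =>
            rcases padj_rl.mp hadj with ⟨rfl, hi⟩ | ⟨rfl, hi⟩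
            · exact absurd rfl hw
            · have : i = 1 := by omega
              exact absurd (this ▸ hy) h1
        have hc₀ : D₀.card ≤ DV.card := by
          rw [hD₀, Finset.card_subtype]
          exact Finset.card_le_card (Finset.filter_subset _ _)
        have := domNum_le _ _ hdom₀
        omega
    · -- x₁ ∉ D', x₂ ∈ D'
      have hsub : DV.image Sum.inl ⊆ D'.erase (Sum.inr 1) := by
        intro a ha
        obtain ⟨w, hw, rfl⟩ := Finset.mem_image.mp ha
        exact Finset.mem_erase.mpr ⟨by simp, (hmemDV w).mp hw⟩
      have e0 : (D'.erase (Sum.inr 1)).card = D'.card - 1 := Finset.card_erase_of_mem h1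
      have hle := Finset.card_le_card hsub
      have hpos : 0 < D'.card := Finset.card_pos.mpr ⟨_, h1⟩
      by_cases hv : Sum.inl v ∈ D'
      · exfalso
        have hdomD : isDomSet G DV := by
          intro w hw
          have hwl : Sum.inl w ∉ D' := fun hm => hw ((hmemDV w).mpr hm)
          obtain ⟨y, hy, hadj⟩ := hdom' _ hwl
          match y with
          | Sum.inl z => exact ⟨z, (hmemDV z).mpr hy, padj_ll.mp hadj⟩
          | Sum.inr i =>
            rcases padj_rl.mp hadj with ⟨rfl, hi⟩ | ⟨rfl, hi⟩
            · have : i = 0 := by omega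
              exact absurd (this ▸ hy) h0
            · exact absurd ((hmemDV w).mpr hv) hw
        have hγ := domNum_le G _ hdomD
        omega
      · refine Or.inr (Or.inr ?_)
        set D₀ : Finset ↥{w : V | w ≠ v} := DV.subtype (fun w => w ∈ {w : V | w ≠ v})
          with hD₀
        have hdom₀ : isDomSet (G.induce {w | w ≠ v}) D₀ := by
          rintro ⟨w, hw⟩ hmem
          have hwDV : w ∉ DV := fun hm => hmem (Finset.mem_subtype.mpr hm)
          have hwl : Sum.inl w ∉ D' := fun hm => hwDV ((hmemDV w).mpr hm)
          obtain ⟨y, hy, hadj⟩ := hdom' _ hwl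
          match y with
          | Sum.inl z =>
            have hzv : z ≠ v := fun hh => hv (hh ▸ hy)
            exact ⟨⟨z, hzv⟩, Finset.mem_subtype.mpr ((hmemDV z).mpr hy),
              show G.Adj z w from padj_ll.mp hadj⟩
          | Sum.inr i =>
            rcases padj_rl.mp hadj with ⟨rfl, hi⟩ | ⟨rfl, hi⟩
            · have : i = 0 := by omega
              exact absurd (this ▸ hy) h0
            · exact absurd rfl hw
        have hc₀ : D₀.card ≤ DV.card := by
          rw [hD₀, Finset.card_subtype]
          exact Finset.card_le_card (Finset.filter_subset _ _)
        have := domNum_le _ _ hdom₀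
        omega
    · -- neither internal vertex in D'
      refine Or.inl ?_
      have hu : Sum.inl u ∈ D' := by
        obtain ⟨y, hy, hadj⟩ := hdom' _ h0
        match y with
        | Sum.inl z =>
          rcases padj_lr.mp hadj with ⟨rfl, -⟩ | ⟨rfl, hi⟩
          · exact hy
          · simp at hi
        | Sum.inr j =>
          rcases padj_rr hadj with ⟨-, hj⟩ | ⟨rfl, -⟩
          · exact absurd hj (by simp)
          · exact absurd hy h1
      have hv : Sum.inl v ∈ D' := by
        obtain ⟨y, hy, hadj⟩ := hdom' _ h1
        match y with
        | Sum.inl z =>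
          rcases padj_lr.mp hadj with ⟨rfl, hi⟩ | ⟨rfl, -⟩
          · simp at hi
          · exact hy
        | Sum.inr j =>
          rcases padj_rr hadj with ⟨rfl, -⟩ | ⟨-, hj⟩
          · exact absurd hy h0
          · exact absurd hj (by simp)
      have hdomD : isDomSet G DV := by
        intro w hw
        have hwl : Sum.inl w ∉ D' := fun hm => hw ((hmemDV w).mpr hm)
        obtain ⟨y, hy, hadj⟩ := hdom' _ hwl
        match y with
        | Sum.inl z => exact ⟨z, (hmemDV z).mpr hy, padj_ll.mp hadj⟩
        | Sum.inr i =>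
          rcases padj_rl.mp hadj with ⟨rfl, hi⟩ | ⟨rfl, hi⟩
          · have : i = 0 := by omega
            exact absurd (this ▸ hy) h0
          · have : i = 1 := by omega
            exact absurd (this ▸ hy) h1
      have hle := Finset.card_le_card himsub
      have hγ := domNum_le G _ hdomD
      exact ⟨DV, hdomD, by omega, (hmemDV u).mpr hu, (hmemDV v).mpr hv⟩
  · -- backward direction
    rintro (⟨D, hdom, hcard, hu, hv⟩ | hlt | hlt)
    · refine le_antisymm ?_ part1
      have hdom' : isDomSet G' (D.image Sum.inl) := by
        intro a ha
        match a with
        | Sum.inl w =>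
          have hw : w ∉ D := fun hm => ha (Finset.mem_image_of_mem _ hm)
          obtain ⟨z, hz, hadj⟩ := hdom w hw
          exact ⟨Sum.inl z, Finset.mem_image_of_mem _ hz, padj_ll.mpr hadj⟩
        | Sum.inr i =>
          by_cases hi : (i : ℕ) = 0
          · exact ⟨Sum.inl u, Finset.mem_image_of_mem _ hu, padj_lr.mpr (Or.inl ⟨rfl, hi⟩)⟩
          · have hi1 : (i : ℕ) = 1 := by omega
            exact ⟨Sum.inl v, Finset.mem_image_of_mem _ hv, padj_lr.mpr (Or.inr ⟨rfl, hi1⟩)⟩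
      calc domNum G' ≤ _ := domNum_le _ _ hdom'
        _ = domNum G := by rw [Finset.card_image_of_injective _ Sum.inl_injective, hcard]
    · refine le_antisymm ?_ part1
      obtain ⟨D₀, hc₀, hd₀⟩ := exists_min (G.induce {w : V | w ≠ u})
      have hdom' : isDomSet G'
          (insert (Sum.inr 0) (D₀.image (fun s => Sum.inl s.1))) := by
        intro a ha
        match a with
        | Sum.inl w =>
          by_cases hwu : w = u
          · exact ⟨Sum.inr 0, Finset.mem_insert_self _ _, padj_rl.mpr (Or.inl ⟨hwu, rfl⟩)⟩
          · have hmem : (⟨w, hwu⟩ : ↥{w : V | w ≠ u}) ∉ D₀ := fun hm =>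
              ha (Finset.mem_insert_of_mem (Finset.mem_image_of_mem _ hm))
            obtain ⟨z, hz, hadj⟩ := hd₀ _ hmem
            exact ⟨Sum.inl z.1, Finset.mem_insert_of_mem (Finset.mem_image_of_mem _ hz),
              padj_ll.mpr hadj⟩
        | Sum.inr i =>
          have hi0 : i ≠ 0 := fun hh => ha (hh ▸ Finset.mem_insert_self _ _)
          have hi : i = 1 := by omega
          exact ⟨Sum.inr 0, Finset.mem_insert_self _ _, hi ▸ padj_01⟩
      calc domNum G' ≤ _ := domNum_le _ _ hdom'
        _ ≤ (D₀.image (fun s => Sum.inl s.1)).card + 1 := Finset.card_insert_le _ _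
        _ ≤ D₀.card + 1 := Nat.add_le_add_right Finset.card_image_le 1
        _ ≤ domNum G := by omega
    · refine le_antisymm ?_ part1
      obtain ⟨D₀, hc₀, hd₀⟩ := exists_min (G.induce {w : V | w ≠ v})
      have hdom' : isDomSet G'
          (insert (Sum.inr 1) (D₀.image (fun s => Sum.inl s.1))) := by
        intro a ha
        match a with
        | Sum.inl w =>
          by_cases hwv : w = v
          · exact ⟨Sum.inr 1, Finset.mem_insert_self _ _, padj_rl.mpr (Or.inr ⟨hwv, rfl⟩)⟩
          · have hmem : (⟨w, hwv⟩ : ↥{w : V | w ≠ v}) ∉ D₀ := fun hm =>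
              ha (Finset.mem_insert_of_mem (Finset.mem_image_of_mem _ hm))
            obtain ⟨z, hz, hadj⟩ := hd₀ _ hmem
            exact ⟨Sum.inl z.1, Finset.mem_insert_of_mem (Finset.mem_image_of_mem _ hz),
              padj_ll.mpr hadj⟩
        | Sum.inr i =>
          have hi0 : i ≠ 1 := fun hh => ha (hh ▸ Finset.mem_insert_self _ _)
          have hi : i = 0 := by omega
          exact ⟨Sum.inr 1, Finset.mem_insert_self _ _, hi ▸ padj_01.symm⟩
      calc domNum G' ≤ _ := domNum_le _ _ hdom'
        _ ≤ (D₀.image (fun s => Sum.inl s.1)).card + 1 := Finset.card_insert_le _ _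
        _ ≤ D₀.card + 1 := Nat.add_le_add_right Finset.card_image_le 1
        _ ≤ domNum G := by omega
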